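/- arXiv:2010.03884 — 6 statements merged into one kernel-verified Lean document; each statement's English description precedes it below -/
import Mathlib

section
/- Let u be a bidirectional infinite word over a finite alphabet A that is c-balanced (for any two factors w, v of u with |w| = |v| and any letter a, ||w|_a - |v|_a| ≤ c). Then for every letter a ∈ A the frequency ρ_a = lim_{|w|→∞, w factor of u} |w|_a/|w| exists. -/
/-- `w` is a factor of the bidirectional infinite word `u : ℤ → A`. -/
def IsFactor {A : Type*} (u : ℤ → A) (w : List A) : Prop :=
  ∃ i : ℤ, w = (List.range w.length).map (fun k => u (i + k))

lemma flat_eq_map_aux {α β : Type*} (f : α → β) (l : List α) :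
    (l.flatMap fun a => [f a]) = l.map f := by
  induction l with
  | nil => rfl
  | cons h t ih => simp [List.flatMap_cons, ih]

/-- in a c-balanced bidirectional infinite word, the frequency of
every letter exists (as a limit of `|w|_a / |w|` over factors `w` with `|w| → ∞`). -/
theorem frequency_exists_of_balanced {A : Type*} [Fintype A] [DecidableEq A]
    (u : ℤ → A) (c : ℝ) (hc : 0 < c)
    (hbal : ∀ w v : List A, IsFactor u w → IsFactor u v → w.length = v.length →
      ∀ a : A, |(w.count a : ℝ) - (v.count a : ℝ)| ≤ c)
    (a : A) :
    ∃ ρ : ℝ, ∀ ε : ℝ, 0 < ε → ∃ N : ℕ, ∀ w : List A, IsFactor u w →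
      N ≤ w.length → |(w.count a : ℝ) / (w.length : ℝ) - ρ| < ε := by
  classical
  set W : ℤ → ℕ → List A := fun i n => (List.range n).map (fun (k : ℕ) => u (i + (k : ℤ))) with hW
  have hWlen : ∀ i n, (W i n).length = n := by
    intro i n; simp only [hW, List.length_map, List.length_range]
  have hWfac : ∀ i n, IsFactor u (W i n) := by
    intro i n
    refine ⟨i, ?_⟩
    rw [show ∀ m, (do let a ← List.range m; pure ((a:ℕ):ℤ)) =
        (List.range m).map (fun a : ℕ => (a:ℤ)) from fun m => flat_eq_map_aux _ _]
    rw [List.map_map, hWlen]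
    rfl
  have hWadd : ∀ (i : ℤ) (m n : ℕ), W i (m + n) = W i m ++ W (i + m) n := by
    intro i m n
    simp only [hW, List.range_add, List.map_append, List.map_map]
    congr 1
    apply List.map_congr_left
    intro k _
    simp only [Function.comp_apply]
    congr 1
    push_cast
    ring
  set g : ℕ → ℝ := fun n => ((W 0 n).count a : ℝ) with hg
  have hbal' : ∀ (i : ℤ) (n : ℕ), |((W i n).count a : ℝ) - g n| ≤ c := by
    intro i n
    exact hbal _ _ (hWfac i n) (hWfac 0 n) (by rw [hWlen, hWlen]) a
  have hA : ∀ m n : ℕ, |g (m + n) - g m - g n| ≤ c := by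
    intro m n
    have h1 : g (m + n) = g m + ((W ((m : ℤ)) n).count a : ℝ) := by
      have := hWadd 0 m n
      rw [zero_add] at this
      simp only [hg, this, List.count_append]
      push_cast; ring
    rw [h1]
    have := hbal' ((m : ℤ)) n
    convert this using 2
    ring
  have hB : ∀ k m : ℕ, |g (k * m) - k * g m| ≤ k * c := by
    intro k m
    induction k with
    | zero => simp [hg, hW]
    | succ k ih =>
      have h2 := hA (k * m) m
      have h1 : (k + 1) * m = k * m + m := by ring
      rw [h1]
      calc |g (k * m + m) - (↑(k + 1)) * g m|
          = |(g (k * m + m) - g (k * m) - g m) + (g (k * m) - k * g m)| := by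
            push_cast; ring_nf
        _ ≤ |g (k * m + m) - g (k * m) - g m| + |g (k * m) - k * g m| := abs_add_le _ _
        _ ≤ c + k * c := add_le_add h2 ih
        _ = (↑(k + 1)) * c := by push_cast; ring
  set x : ℕ → ℝ := fun n => g n / n with hx
  have hC : ∀ m n : ℕ, 1 ≤ m → 1 ≤ n → |x (n * m) - x m| ≤ c / m := by
    intro m n hm hn
    have hm0 : (0:ℝ) < m := by exact_mod_cast hm
    have hn0 : (0:ℝ) < n := by exact_mod_cast hn
    have hnm : (0:ℝ) < ((n * m : ℕ) : ℝ) := by push_cast; positivity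
    have hxeq : x (n * m) - x m = (g (n * m) - n * g m) / ((n * m : ℕ) : ℝ) := by
      simp only [hx]
      push_cast
      field_simp
    rw [hxeq, abs_div, abs_of_pos hnm]
    rw [div_le_iff₀ hnm]
    calc |g (n * m) - ↑n * g m| ≤ n * c := hB n m
      _ = c / ↑m * ↑(n * m) := by push_cast; field_simp
  have hD : ∀ m n : ℕ, 1 ≤ m → 1 ≤ n → |x n - x m| ≤ c / n + c / m := by
    intro m n hm hn
    have h1 := hC m n hm hn
    have h2 := hC n m hn hm
    rw [mul_comm m n] at h2
    calc |x n - x m| = |(x (n * m) - x m) - (x (n * m) - x n)| := by ring_nf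
      _ ≤ |x (n * m) - x m| + |x (n * m) - x n| := abs_sub _ _
      _ ≤ c / m + c / n := add_le_add h1 h2
      _ = c / n + c / m := by ring
  -- x is Cauchy
  have hcauchy : CauchySeq x := by
    rw [Metric.cauchySeq_iff]
    intro ε hε
    obtain ⟨N, hN⟩ := exists_nat_gt (2 * c / ε)
    refine ⟨max N 1, ?_⟩
    intro m hm n hn
    have hm1 : 1 ≤ m := le_trans (le_max_right N 1) hm
    have hn1 : 1 ≤ n := le_trans (le_max_right N 1) hn
    have hNpos : (0:ℝ) < N := lt_of_le_of_lt (by positivity) hN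
    have hmN : (N:ℝ) ≤ m := by exact_mod_cast le_trans (le_max_left N 1) hm
    have hnN : (N:ℝ) ≤ n := by exact_mod_cast le_trans (le_max_left N 1) hn
    have hm0 : (0:ℝ) < m := lt_of_lt_of_le hNpos hmN
    have hn0 : (0:ℝ) < n := lt_of_lt_of_le hNpos hnN
    rw [Real.dist_eq]
    calc |x m - x n| ≤ c / m + c / n := hD n m hn1 hm1
      _ ≤ c / N + c / N := add_le_add
          (div_le_div_of_nonneg_left hc.le hNpos hmN)
          (div_le_div_of_nonneg_left hc.le hNpos hnN)
      _ = 2 * c / N := by ring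
      _ < ε := by
          rw [div_lt_iff₀ hNpos]
          calc 2 * c = (2 * c / ε) * ε := by field_simp
            _ < N * ε := mul_lt_mul_of_pos_right hN hε
            _ = ε * N := by ring
  obtain ⟨ρ, hρ⟩ := cauchySeq_tendsto_of_complete hcauchy
  have hE : ∀ n : ℕ, 1 ≤ n → |x n - ρ| ≤ c / n := by
    intro n hn
    have t1 : Filter.Tendsto (fun m : ℕ => |x n - x m|) Filter.atTop
        (nhds |x n - ρ|) := (Filter.Tendsto.const_sub _ hρ).abs
    have t2 : Filter.Tendsto (fun m : ℕ => c / n + c / m) Filter.atTop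
        (nhds (c / n + 0)) :=
      Filter.Tendsto.const_add _ (tendsto_const_div_atTop_nhds_zero_nat c)
    rw [add_zero] at t2
    refine le_of_tendsto_of_tendsto t1 t2 ?_
    filter_upwards [Filter.eventually_ge_atTop 1] with m hm
    exact hD m n hm hn
  refine ⟨ρ, ?_⟩
  intro ε hε
  obtain ⟨N, hN⟩ := exists_nat_gt (2 * c / ε)
  refine ⟨max N 1, ?_⟩
  intro w hw hlen
  set n := w.length with hn
  have hn1 : 1 ≤ n := le_trans (le_max_right N 1) hlen
  have hNpos : (0:ℝ) < N := lt_of_le_of_lt (by positivity) hN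
  have hnN : (N:ℝ) ≤ n := by exact_mod_cast le_trans (le_max_left N 1) hlen
  have hn0 : (0:ℝ) < n := lt_of_lt_of_le hNpos hnN
  have hcount : |(w.count a : ℝ) - g n| ≤ c := by
    have := hbal w (W 0 n) hw (hWfac 0 n) (by rw [hWlen]) a
    exact this
  have h1 : |(w.count a : ℝ) / n - x n| ≤ c / n := by
    have : (w.count a : ℝ) / n - x n = ((w.count a : ℝ) - g n) / n := by
      simp only [hx]; field_simp
    rw [this, abs_div, abs_of_pos hn0]
    gcongr
  calc |(w.count a : ℝ) / n - ρ|
      = |((w.count a : ℝ) / n - x n) + (x n - ρ)| := by ring_nf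
    _ ≤ |(w.count a : ℝ) / n - x n| + |x n - ρ| := abs_add_le _ _
    _ ≤ c / n + c / n := add_le_add h1 (hE n hn1)
    _ = 2 * c / n := by ring
    _ ≤ 2 * c / N := div_le_div_of_nonneg_left (by positivity) hNpos hnN
    _ < ε := by
        rw [div_lt_iff₀ hNpos]
        calc 2 * c = (2 * c / ε) * ε := by field_simp
          _ < N * ε := mul_lt_mul_of_pos_right hN hε
          _ = ε * N := by ring
end

section
/- Let u be a bidirectional c-balanced infinite word over a finite alphabet A with letter frequencies ρ_a. Then for every factor w of u and every letter a ∈ A one has ||w|_a − ρ_a·|w|| ≤ c. -/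
theorem coe_range_eq (nn : ℕ) :
    (do let a ← List.range nn; pure ((a:ℤ))) = (List.range nn).map (fun k : ℕ => (k:ℤ)) := by
  show (List.range nn).flatMap (fun a : ℕ => [(a:ℤ)]) = _
  induction (List.range nn) with
  | nil => rfl
  | cons h t ih => simp [List.flatMap_cons, ih]

theorem isFactor_iff {A : Type*} (u : ℤ → A) (w : List A) :
    IsFactor u w ↔ ∃ i : ℤ, w = (List.range w.length).map (fun k : ℕ => u (i + k)) := by
  unfold IsFactor
  have h : ∀ i : ℤ, (List.map (fun k : ℤ => u (i + k))
      (do let a ← List.range w.length; pure ((a:ℤ))))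
      = (List.range w.length).map (fun k : ℕ => u (i + k)) := by
    intro i
    rw [coe_range_eq, List.map_map]
    rfl
  constructor
  · rintro ⟨i, hi⟩; exact ⟨i, hi.trans (h i)⟩
  · rintro ⟨i, hi⟩; exact ⟨i, hi.trans (h i).symm⟩

/-- if `u` is c-balanced and `ρ a` is the frequency of the letter `a`
(i.e. the limit of `|w|_a/|w|` over factors `w` of `u` with `|w| → ∞`), then
for every factor `w` of `u` and every letter `a` one has `||w|_a − ρ_a·|w|| ≤ c`. -/
theorem balanced_count_close_to_frequency {A : Type*} [Fintype A] [DecidableEq A]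
    (u : ℤ → A) (c : ℝ) (hc : 0 < c)
    (hbal : ∀ w v : List A, IsFactor u w → IsFactor u v → w.length = v.length →
      ∀ a : A, |(w.count a : ℝ) - (v.count a : ℝ)| ≤ c)
    (ρ : A → ℝ)
    (hfreq : ∀ a : A, ∀ ε : ℝ, 0 < ε → ∃ N : ℕ, ∀ w : List A, IsFactor u w →
      N ≤ w.length → |(w.count a : ℝ) / (w.length : ℝ) - ρ a| < ε) :
    ∀ w : List A, IsFactor u w → ∀ a : A,
      |(w.count a : ℝ) - ρ a * (w.length : ℝ)| ≤ c := by
  intro w hw a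
  obtain ⟨i, hwi⟩ := (isFactor_iff u w).mp hw
  set n := w.length with hn
  rcases Nat.eq_zero_or_pos n with h0 | hpos
  · have hwnil : w = [] := List.length_eq_zero_iff.mp h0
    rw [h0]
    simpa [hwnil] using hc.le
  -- the m-fold extension of w
  set V : ℕ → List A := fun m => (List.range (m * n)).map (fun k : ℕ => u (i + k)) with hV
  have hVlen : ∀ m, (V m).length = m * n := by intro m; simp [hV]
  have hVfac : ∀ m, IsFactor u (V m) := by
    intro m
    exact (isFactor_iff u (V m)).mpr ⟨i, by rw [hVlen]⟩
  -- blocks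
  set B : ℕ → List A := fun m => (List.range n).map (fun k : ℕ => u (i + ((m * n : ℕ) + k)))
    with hB
  have hBlen : ∀ m, (B m).length = n := by intro m; simp [hB]
  have hVsucc : ∀ m, V (m + 1) = V m ++ B m := by
    intro m
    have h1 : (m + 1) * n = m * n + n := by ring
    simp only [hV, hB, h1, List.range_add, List.map_append, List.map_map]
    congr 1
  have hBfac : ∀ m, IsFactor u (B m) := by
    intro m
    refine (isFactor_iff u (B m)).mpr ⟨i + (m * n : ℕ), ?_⟩
    rw [hBlen]
    refine List.map_congr_left ?_
    intro k _
    congr 1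
    push_cast
    ring
  -- counting bound
  have hcount : ∀ m : ℕ, |((V m).count a : ℝ) - (m : ℝ) * (w.count a : ℝ)| ≤ (m : ℝ) * c := by
    intro m
    induction m with
    | zero => simp [hV]
    | succ m ih =>
      have hb : |((B m).count a : ℝ) - (w.count a : ℝ)| ≤ c := by
        have := hbal w (B m) hw (hBfac m) (by rw [hBlen m]) a
        rwa [abs_sub_comm] at this
      have hcnt : ((V (m + 1)).count a : ℝ)
          = ((V m).count a : ℝ) + ((B m).count a : ℝ) := by
        rw [hVsucc m, List.count_append]; push_cast; ring
      have habs : |((V m).count a : ℝ) - (m : ℝ) * (w.count a : ℝ)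
            + (((B m).count a : ℝ) - (w.count a : ℝ))|
          ≤ |((V m).count a : ℝ) - (m : ℝ) * (w.count a : ℝ)|
            + |((B m).count a : ℝ) - (w.count a : ℝ)| := abs_add_le _ _
      have heq : ((V (m+1)).count a : ℝ) - ((m : ℕ) + 1 : ℝ) * (w.count a : ℝ)
          = ((V m).count a : ℝ) - (m : ℝ) * (w.count a : ℝ)
            + (((B m).count a : ℝ) - (w.count a : ℝ)) := by
        rw [hcnt]; ring
      push_cast
      push_cast at heq
      rw [heq]
      calc _ ≤ _ := habs
        _ ≤ (m : ℝ) * c + c := add_le_add ih hb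
        _ = ((m : ℝ) + 1) * c := by ring
  -- conclude via the frequency
  refine le_of_forall_pos_le_add ?_
  intro ε hε
  have hn0 : (0 : ℝ) < (n : ℝ) := by exact_mod_cast hpos
  obtain ⟨N, hN⟩ := hfreq a (ε / n) (by positivity)
  set m := N + 1 with hm
  have hm0 : (0 : ℝ) < (m : ℝ) := by exact_mod_cast Nat.succ_pos N
  have hmn : N ≤ (V m).length := by
    rw [hVlen]
    calc N ≤ m := Nat.le_succ N
      _ = m * 1 := (mul_one m).symm
      _ ≤ m * n := Nat.mul_le_mul_left m hpos
  have hfV := hN (V m) (hVfac m) hmn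
  rw [hVlen] at hfV
  set x : ℝ := ((V m).count a : ℝ) with hx
  set cw : ℝ := (w.count a : ℝ) with hcw
  have h1 : |x - (m : ℝ) * cw| ≤ (m : ℝ) * c := hcount m
  have key : cw - ρ a * (n : ℝ)
      = ((m : ℝ) * cw - x) / (m : ℝ) + (x / ((m : ℝ) * (n : ℝ)) - ρ a) * (n : ℝ) := by
    field_simp
    ring
  calc |cw - ρ a * (n : ℝ)|
      ≤ |((m : ℝ) * cw - x) / (m : ℝ)| + |(x / ((m : ℝ) * (n : ℝ)) - ρ a) * (n : ℝ)| := by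
        rw [key]; exact abs_add_le _ _
    _ ≤ c + ε := by
        have e1 : |((m : ℝ) * cw - x) / (m : ℝ)| ≤ c := by
          rw [abs_div, abs_of_pos hm0, div_le_iff₀ hm0, abs_sub_comm]
          linarith [h1]
        have e2 : |(x / ((m : ℝ) * (n : ℝ)) - ρ a) * (n : ℝ)| ≤ ε := by
          rw [abs_mul, abs_of_pos hn0]
          have hcast : ((m * n : ℕ) : ℝ) = (m : ℝ) * (n : ℝ) := by push_cast; ring
          rw [hcast] at hfV
          calc |x / ((m : ℝ) * (n : ℝ)) - ρ a| * (n : ℝ)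
              ≤ (ε / n) * (n : ℝ) := mul_le_mul_of_nonneg_right hfV.le hn0.le
            _ = ε := by field_simp
        linarith
end

section
/- Let A, B be finite alphabets, u a balanced bidirectional infinite word over A, and ψ : A* → B* a non-erasing morphism. Then ψ(u) is also a balanced infinite word over B. -/
/-- `w` is a factor of the image `ψ(u)` of the bidirectional word `u` under the
morphism `ψ : A* → B*` (given by its values on letters): `w` is an infix of the
`ψ`-image of some factor of `u`. -/
def IsImageFactor {A B : Type*} (u : ℤ → A) (ψ : A → List B) (w : List B) : Prop :=
  ∃ z : List A, IsFactor u z ∧ w <:+: z.flatMap ψ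

namespace BalAux

variable {A B : Type*}

lemma flatMap_single (l : List ℕ) : (l.flatMap fun a => [(a : ℤ)]) = l.map (fun a : ℕ => (a:ℤ)) := by
  induction l with
  | nil => rfl
  | cons a l ih => simp at ih; simp [List.flatMap_cons, ih]

/-- clean version of the segment of `u` starting at `i` of length `n`. -/
def seg (u : ℤ → A) (i : ℤ) (n : ℕ) : List A :=
  (List.range n).map fun k : ℕ => u (i + (k : ℤ))

lemma coe_eq_seg (u : ℤ → A) (i : ℤ) (n : ℕ) :
    (List.range n).map (fun k => u (i + k)) = seg u i n := by
  show List.map _ ((List.range n).flatMap fun (a : ℕ) => [(a : ℤ)]) = _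
  rw [← List.map_eq_flatMap, List.map_map]; rfl

@[simp] lemma length_seg (u : ℤ → A) (i : ℤ) (n : ℕ) : (seg u i n).length = n := by
  simp [seg]

lemma isFactor_iff {u : ℤ → A} {w : List A} :
    IsFactor u w ↔ ∃ i, w = seg u i w.length := by
  unfold IsFactor
  simp_rw [coe_eq_seg]

lemma isFactor_seg (u : ℤ → A) (i : ℤ) (n : ℕ) : IsFactor u (seg u i n) :=
  isFactor_iff.2 ⟨i, by rw [length_seg]⟩

lemma isFactor_nil (u : ℤ → A) : IsFactor u [] := ⟨0, rfl⟩

lemma seg_add (u : ℤ → A) (i : ℤ) (p q : ℕ) :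
    seg u i (p + q) = seg u i p ++ seg u (i + p) q := by
  unfold seg
  rw [List.range_add, List.map_append, List.map_map]
  congr 1
  refine List.map_congr_left fun k _ => ?_
  show u (i + ((p : ℤ) + k)) = u (i + p + k)
  congr 1
  ring

lemma seg_succ_left (u : ℤ → A) (i : ℤ) (n : ℕ) :
    seg u i (n + 1) = u i :: seg u (i + 1) n := by
  rw [show n + 1 = 1 + n by ring, seg_add]
  simp [seg, List.range_succ]

lemma seg_succ_right (u : ℤ → A) (i : ℤ) (n : ℕ) :
    seg u i (n + 1) = seg u i n ++ [u (i + n)] := by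
  rw [seg_add]
  simp [seg, List.range_succ]

lemma isFactor_tail {u : ℤ → A} {a : A} {z : List A} (h : IsFactor u (a :: z)) :
    IsFactor u z := by
  rw [isFactor_iff] at h
  obtain ⟨i, hi⟩ := h
  rw [show (a :: z).length = z.length + 1 from rfl, seg_succ_left] at hi
  exact isFactor_iff.2 ⟨i + 1, (List.cons.injEq _ _ _ _ ▸ hi).2⟩

lemma isFactor_init {u : ℤ → A} {a : A} {z : List A} (h : IsFactor u (z ++ [a])) :
    IsFactor u z := by
  rw [isFactor_iff] at h
  obtain ⟨i, hi⟩ := h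
  rw [show (z ++ [a]).length = z.length + 1 by simp, seg_succ_right] at hi
  exact isFactor_iff.2 ⟨i, (List.append_inj hi (by simp)).1⟩

end BalAux

namespace BalAux

variable {A B : Type*}

lemma trimLeft (u : ℤ → A) (ψ : A → List B) (M : ℕ) (hM : ∀ a, (ψ a).length ≤ M)
    (r : List B) :
    ∀ z : List A, IsFactor u z → ∀ s : List B, z.flatMap ψ = s ++ r →
      ∃ (z' : List A) (s' : List B), IsFactor u z' ∧ z'.flatMap ψ = s' ++ r ∧ s'.length ≤ M := by
  intro z
  induction z with
  | nil =>
    intro _ s h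
    rw [List.flatMap_nil] at h
    obtain ⟨rfl, rfl⟩ := List.append_eq_nil_iff.mp h.symm
    exact ⟨[], [], isFactor_nil u, by simp, Nat.zero_le M⟩
  | cons a z₁ ih =>
    intro hz s h
    by_cases hle : (ψ a).length ≤ s.length
    · have h1 : ψ a <+: (a :: z₁).flatMap ψ := by
        rw [List.flatMap_cons]; exact List.prefix_append _ _
      have h2 : s <+: (a :: z₁).flatMap ψ := by rw [h]; exact List.prefix_append _ _
      obtain ⟨s₁, rfl⟩ := List.prefix_of_prefix_length_le h1 h2 hle
      have h3 : z₁.flatMap ψ = s₁ ++ r := by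
        have := h
        rw [List.flatMap_cons, List.append_assoc] at this
        exact List.append_cancel_left this
      exact ih (isFactor_tail hz) s₁ h3
    · exact ⟨a :: z₁, s, hz, h, le_trans (le_of_lt (lt_of_not_ge hle)) (hM a)⟩

lemma trimRight (u : ℤ → A) (ψ : A → List B) (M : ℕ) (hM : ∀ a, (ψ a).length ≤ M)
    (l : List B) :
    ∀ z : List A, IsFactor u z → ∀ t : List B, z.flatMap ψ = l ++ t →
      ∃ (z' : List A) (t' : List B), IsFactor u z' ∧ z'.flatMap ψ = l ++ t' ∧ t'.length ≤ M := by
  intro z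
  induction z using List.reverseRecOn with
  | nil =>
    intro _ t h
    rw [List.flatMap_nil] at h
    obtain ⟨rfl, rfl⟩ := List.append_eq_nil_iff.mp h.symm
    exact ⟨[], [], isFactor_nil u, by simp, Nat.zero_le M⟩
  | append_singleton z₁ a ih =>
    intro hz t h
    by_cases hle : (ψ a).length ≤ t.length
    · have h1 : ψ a <:+ (z₁ ++ [a]).flatMap ψ := by
        rw [List.flatMap_append]; simp
      have h2 : t <:+ (z₁ ++ [a]).flatMap ψ := by rw [h]; exact ⟨l, rfl⟩
      obtain ⟨t₁, rfl⟩ := List.suffix_of_suffix_length_le h1 h2 hle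
      have h3 : z₁.flatMap ψ = l ++ t₁ := by
        have := h
        rw [List.flatMap_append, show ([a] : List A).flatMap ψ = ψ a by simp,
          show l ++ (t₁ ++ ψ a) = (l ++ t₁) ++ ψ a by simp] at this
        exact List.append_cancel_right this
      exact ih (isFactor_init hz) t₁ h3
    · exact ⟨z₁ ++ [a], t, hz, h, le_trans (le_of_lt (lt_of_not_ge hle)) (hM a)⟩

lemma trim (u : ℤ → A) (ψ : A → List B) (M : ℕ) (hM : ∀ a, (ψ a).length ≤ M)
    (w : List B) (z : List A) (hz : IsFactor u z) (hinf : w <:+: z.flatMap ψ) :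
    ∃ (z' : List A) (s' t' : List B), IsFactor u z' ∧
      z'.flatMap ψ = s' ++ w ++ t' ∧ s'.length ≤ M ∧ t'.length ≤ M := by
  obtain ⟨s, t, h⟩ := hinf
  obtain ⟨z₁, s₁, hz₁, h₁, hs₁⟩ := trimLeft u ψ M hM (w ++ t) z hz s (by rw [← h, List.append_assoc])
  obtain ⟨z₂, t₂, hz₂, h₂, ht₂⟩ := trimRight u ψ M hM (s₁ ++ w) z₁ hz₁ t (by rw [h₁, List.append_assoc])
  exact ⟨z₂, s₁, t₂, hz₂, h₂, hs₁, ht₂⟩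

/-- sum over a map equals weighted sum of counts -/
lemma sum_map_eq_sum_count [Fintype A] [DecidableEq A] (f : A → ℕ) (z : List A) :
    (z.map f).sum = ∑ a : A, z.count a * f a := by
  induction z with
  | nil => simp
  | cons a z ih =>
    have hstep : ∀ x : A, (a :: z).count x * f x = z.count x * f x + (if a = x then f x else 0) := by
      intro x
      rw [List.count_cons]
      by_cases h : a = x <;> simp [h, add_mul]
    simp only [List.map_cons, List.sum_cons, ih, hstep, Finset.sum_add_distrib]
    rw [Finset.sum_ite_eq Finset.univ a f]
    simp [add_comm]

lemma count_flatMap_eq [Fintype A] [DecidableEq A] [DecidableEq B] (ψ : A → List B)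
    (z : List A) (b : B) :
    (z.flatMap ψ).count b = ∑ a : A, z.count a * (ψ a).count b := by
  rw [← sum_map_eq_sum_count (fun a => (ψ a).count b) z]
  induction z with
  | nil => simp
  | cons a z ih => simp [List.flatMap_cons, List.count_append, ih]

lemma length_flatMap_eq [Fintype A] [DecidableEq A] (ψ : A → List B) (z : List A) :
    (z.flatMap ψ).length = ∑ a : A, z.count a * (ψ a).length := by
  rw [← sum_map_eq_sum_count (fun a => (ψ a).length) z, List.length_flatMap]

lemma length_le_length_flatMap (ψ : A → List B) (hψ : ∀ a, ψ a ≠ []) (z : List A) :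
    z.length ≤ (z.flatMap ψ).length := by
  induction z with
  | nil => simp
  | cons a z ih =>
    rw [List.flatMap_cons, List.length_append]
    have := List.length_pos_iff.2 (hψ a)
    simp only [List.length_cons]
    omega

end BalAux


lemma exists_alpha (g : ℕ → ℝ) (c : ℝ) (hc : 0 < c) (hg0 : ∀ n, 0 ≤ g n) (h0 : g 0 = 0)
    (hq : ∀ p q : ℕ, |g (p + q) - g p - g q| ≤ c) :
    ∃ α : ℝ, 0 ≤ α ∧ ∀ n : ℕ, |g n - α * n| ≤ c := by
  have hmul : ∀ n m : ℕ, |g (n * m) - n * g m| ≤ n * c := by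
    intro n m
    induction n with
    | zero => simp [h0]
    | succ n ih =>
      have h1 := hq (n * m) m
      have he : (n + 1) * m = n * m + m := by ring
      rw [he]
      have : g (n * m + m) - ((n : ℝ) + 1) * g m =
          (g (n * m + m) - g (n * m) - g m) + (g (n * m) - n * g m) := by ring
      push_cast
      rw [this]
      calc |(g (n*m+m) - g (n*m) - g m) + (g (n*m) - n * g m)|
          ≤ |g (n*m+m) - g (n*m) - g m| + |g (n*m) - n * g m| := abs_add_le _ _
        _ ≤ c + n * c := add_le_add h1 ih
        _ = ((n : ℝ) + 1) * c := by ring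
  have key : ∀ n m : ℕ, 0 < n → 0 < m → (g n - c) / n ≤ (g m + c) / m := by
    intro n m hn hm
    have h1 := abs_le.mp (hmul n m)
    have h2 := abs_le.mp (hmul m n)
    rw [Nat.mul_comm] at h2
    have hn' : (0 : ℝ) < n := by exact_mod_cast hn
    have hm' : (0 : ℝ) < m := by exact_mod_cast hm
    rw [div_le_div_iff₀ hn' hm']
    have hcn : (0:ℝ) ≤ (n:ℝ) * c := by positivity
    nlinarith [h1.1, h1.2, h2.1, h2.2]
  set S : Set ℝ := {x | ∃ m : ℕ, 0 < m ∧ x = (g m + c) / m} with hS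
  have hne : S.Nonempty := ⟨(g 1 + c) / (1:ℕ), 1, one_pos, rfl⟩
  have hpos : ∀ x ∈ S, (0:ℝ) ≤ x := by
    rintro x ⟨m, hm, rfl⟩
    have : (0:ℝ) < m := by exact_mod_cast hm
    have := hg0 m
    positivity
  have hbdd : BddBelow S := ⟨0, fun x hx => hpos x hx⟩
  refine ⟨sInf S, le_csInf hne hpos, ?_⟩
  intro n
  rcases Nat.eq_zero_or_pos n with rfl | hn
  · simp [h0, le_of_lt hc]
  · have hub : sInf S ≤ (g n + c) / n := csInf_le hbdd ⟨n, hn, rfl⟩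
    have hlb : (g n - c) / n ≤ sInf S := le_csInf hne (by rintro x ⟨m, hm, rfl⟩; exact key n m hn hm)
    have hn' : (0 : ℝ) < n := by exact_mod_cast hn
    rw [abs_le]
    constructor
    · have := mul_le_mul_of_nonneg_right hub (le_of_lt hn')
      rw [div_mul_cancel₀ _ (ne_of_gt hn')] at this
      nlinarith
    · have := mul_le_mul_of_nonneg_right hlb (le_of_lt hn')
      rw [div_mul_cancel₀ _ (ne_of_gt hn')] at this
      nlinarith



open BalAux in
/-- the image of a balanced bidirectional infinite word under a
non-erasing morphism is balanced. -/
theorem image_of_balanced_is_balanced {A B : Type*} [Fintype A] [DecidableEq A]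
    [Fintype B] [DecidableEq B]
    (u : ℤ → A) (ψ : A → List B) (hψ : ∀ a : A, ψ a ≠ [])
    (hbal : ∃ c : ℝ, 0 < c ∧ ∀ w v : List A, IsFactor u w → IsFactor u v →
      w.length = v.length → ∀ a : A, |(w.count a : ℝ) - (v.count a : ℝ)| ≤ c) :
    ∃ C : ℝ, 0 < C ∧ ∀ w v : List B, IsImageFactor u ψ w → IsImageFactor u ψ v →
      w.length = v.length → ∀ b : B, |(w.count b : ℝ) - (v.count b : ℝ)| ≤ C := by
  classical
  obtain ⟨c, hc, hbal⟩ := hbal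
  haveI : Nonempty A := ⟨u 0⟩
  set M : ℕ := Finset.univ.sup (fun a : A => (ψ a).length) with hMdef
  have hMa : ∀ a, (ψ a).length ≤ M := fun a => by
    rw [hMdef]; exact Finset.le_sup (f := fun a : A => (ψ a).length) (Finset.mem_univ a)
  have hM1 : 1 ≤ M := le_trans (List.length_pos_iff.2 (hψ (Classical.arbitrary A))) (hMa _)
  -- existence of letter frequencies
  have hex : ∀ a : A, ∃ α : ℝ, 0 ≤ α ∧ ∀ n : ℕ, |((seg u 0 n).count a : ℝ) - α * n| ≤ c := by
    intro a
    refine exists_alpha (fun n => ((seg u 0 n).count a : ℝ)) c hc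
      (fun n => by positivity) (by simp [seg]) ?_
    intro p q
    have hsplit : seg u 0 (p + q) = seg u 0 p ++ seg u ((0:ℤ) + p) q := seg_add u 0 p q
    have hb := hbal (seg u ((0:ℤ) + p) q) (seg u 0 q)
      (isFactor_seg u _ q) (isFactor_seg u 0 q) (by simp) a
    show |((seg u 0 (p+q)).count a : ℝ) - ((seg u 0 p).count a : ℝ)
      - ((seg u 0 q).count a : ℝ)| ≤ c
    rw [hsplit, List.count_append]
    push_cast
    have heq : ((seg u 0 p).count a : ℝ) + ((seg u ((0:ℤ)+p) q).count a : ℝ)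
        - (seg u 0 p).count a - (seg u 0 q).count a
        = ((seg u ((0:ℤ)+p) q).count a : ℝ) - ((seg u 0 q).count a : ℝ) := by ring
    rw [heq]
    exact hb
  choose α hα0 hα using hex
  -- deviation bound for arbitrary factors
  have dev : ∀ z : List A, IsFactor u z → ∀ a : A,
      |(z.count a : ℝ) - α a * z.length| ≤ 2 * c := by
    intro z hz a
    have h1 := hbal z (seg u 0 z.length) hz (isFactor_seg u 0 _) (by simp) a
    have h2 := hα a z.length
    calc |(z.count a : ℝ) - α a * z.length|
        ≤ |(z.count a : ℝ) - ((seg u 0 z.length).count a : ℝ)|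
          + |((seg u 0 z.length).count a : ℝ) - α a * z.length| := abs_sub_le _ _ _
      _ ≤ c + c := add_le_add h1 h2
      _ = 2 * c := by ring
  set E : ℝ := (Fintype.card A : ℝ) * M with hE
  have hE0 : (0:ℝ) ≤ E := by positivity
  -- generic weighted estimate
  have gen : ∀ f : A → ℕ, (∀ a, f a ≤ M) → ∀ z : List A, IsFactor u z →
      |(∑ a : A, (z.count a : ℝ) * (f a : ℝ)) - (∑ a : A, α a * (f a : ℝ)) * z.length|
        ≤ 2 * c * E := by
    intro f hf z hz
    have hrw : (∑ a : A, (z.count a : ℝ) * (f a : ℝ)) - (∑ a : A, α a * (f a : ℝ)) * z.length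
        = ∑ a : A, ((z.count a : ℝ) - α a * z.length) * (f a : ℝ) := by
      rw [Finset.sum_mul, ← Finset.sum_sub_distrib]
      exact Finset.sum_congr rfl fun a _ => by ring
    rw [hrw]
    refine le_trans (Finset.abs_sum_le_sum_abs _ _) ?_
    have hterm : ∀ a ∈ (Finset.univ : Finset A),
        |((z.count a : ℝ) - α a * z.length) * (f a : ℝ)| ≤ 2 * c * (M : ℝ) := by
      intro a _
      rw [abs_mul]
      have h1 : |(f a : ℝ)| ≤ (M : ℝ) := by
        rw [abs_of_nonneg (by positivity)]
        exact_mod_cast hf a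
      exact mul_le_mul (dev z hz a) h1 (abs_nonneg _) (by positivity)
    calc ∑ a : A, |((z.count a : ℝ) - α a * z.length) * (f a : ℝ)|
        ≤ ∑ _a : A, (2 * c * (M : ℝ)) := Finset.sum_le_sum hterm
      _ = (Fintype.card A : ℝ) * (2 * c * (M : ℝ)) := by
          rw [Finset.sum_const, nsmul_eq_mul, Finset.card_univ]
      _ = 2 * c * E := by rw [hE]; ring
  -- count and length estimates for images of factors
  have estC : ∀ z : List A, IsFactor u z → ∀ b : B,
      |((z.flatMap ψ).count b : ℝ) - (∑ a : A, α a * ((ψ a).count b : ℝ)) * z.length|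
        ≤ 2 * c * E := by
    intro z hz b
    have h := gen (fun a => (ψ a).count b)
      (fun a => le_trans (List.count_le_length) (hMa a)) z hz
    have hcnt : ((z.flatMap ψ).count b : ℝ) = ∑ a : A, (z.count a : ℝ) * ((ψ a).count b : ℝ) := by
      rw [count_flatMap_eq ψ z b]
      push_cast
      rfl
    rw [hcnt]
    exact h
  have estL : ∀ z : List A, IsFactor u z →
      |((z.flatMap ψ).length : ℝ) - (∑ a : A, α a * ((ψ a).length : ℝ)) * z.length|
        ≤ 2 * c * E := by
    intro z hz
    have h := gen (fun a => (ψ a).length) hMa z hz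
    have hlen : ((z.flatMap ψ).length : ℝ) = ∑ a : A, (z.count a : ℝ) * ((ψ a).length : ℝ) := by
      rw [length_flatMap_eq ψ z]
      push_cast
      rfl
    rw [hlen]
    exact h
  set K : ℝ := 2 * c * E + 2 * M with hK
  have hM1' : (1:ℝ) ≤ (M:ℝ) := by exact_mod_cast hM1
  have hK0 : 0 < K := by rw [hK]; nlinarith
  -- estimates for image factors
  have himg : ∀ w : List B, IsImageFactor u ψ w → ∃ n : ℕ,
      |((w.length : ℕ) : ℝ) - (∑ a : A, α a * ((ψ a).length : ℝ)) * n| ≤ K ∧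
      ∀ b : B, |((w.count b : ℕ) : ℝ) - (∑ a : A, α a * ((ψ a).count b : ℝ)) * n| ≤ K := by
    intro w hw
    obtain ⟨z, hz, hinf⟩ := hw
    obtain ⟨z', s', t', hz', heq, hs', ht'⟩ := trim u ψ M hMa w z hz hinf
    have hsM : ((s'.length : ℕ) : ℝ) ≤ (M:ℝ) := by exact_mod_cast hs'
    have htM : ((t'.length : ℕ) : ℝ) ≤ (M:ℝ) := by exact_mod_cast ht'
    have hs0 : (0:ℝ) ≤ (s'.length : ℝ) := by positivity
    have ht0 : (0:ℝ) ≤ (t'.length : ℝ) := by positivity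
    refine ⟨z'.length, ?_, ?_⟩
    · have h := abs_le.mp (estL z' hz')
      have hlen : ((z'.flatMap ψ).length : ℝ) = (s'.length : ℝ) + w.length + t'.length := by
        rw [heq]; push_cast [List.length_append]; ring
      rw [hlen] at h
      rw [abs_le, hK]
      constructor <;> linarith [h.1, h.2]
    · intro b
      have h := abs_le.mp (estC z' hz' b)
      have hcnt : ((z'.flatMap ψ).count b : ℝ)
          = (s'.count b : ℝ) + w.count b + t'.count b := by
        rw [heq]; push_cast [List.count_append]; ring
      rw [hcnt] at h
      have hsc : ((s'.count b : ℕ) : ℝ) ≤ (M:ℝ) :=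
        le_trans (by exact_mod_cast List.count_le_length (a := b) (l := s')) hsM
      have htc : ((t'.count b : ℕ) : ℝ) ≤ (M:ℝ) :=
        le_trans (by exact_mod_cast List.count_le_length (a := b) (l := t')) htM
      have hsc0 : (0:ℝ) ≤ (s'.count b : ℝ) := by positivity
      have htc0 : (0:ℝ) ≤ (t'.count b : ℝ) := by positivity
      rw [abs_le, hK]
      constructor <;> linarith [h.1, h.2]
  -- the total length frequency is at least 1
  have hL1 : (1:ℝ) ≤ ∑ a : A, α a * ((ψ a).length : ℝ) := by
    by_contra hcon
    push_neg at hcon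
    set L : ℝ := ∑ a : A, α a * ((ψ a).length : ℝ)
    have hforall : ∀ n : ℕ, (n : ℝ) * (1 - L) ≤ 2 * c * E := by
      intro n
      have h := estL (seg u 0 n) (isFactor_seg u 0 n)
      rw [length_seg] at h
      have hge : (n : ℝ) ≤ (((seg u 0 n).flatMap ψ).length : ℝ) := by
        have h2 := length_le_length_flatMap ψ hψ (seg u 0 n)
        rw [length_seg] at h2
        exact_mod_cast h2
      have h3 := abs_le.mp h
      nlinarith [h3.1, h3.2]
    have h1L : (0:ℝ) < 1 - L := by linarith
    obtain ⟨n, hn⟩ := exists_nat_gt ((2 * c * E) / (1 - L))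
    rw [div_lt_iff₀ h1L] at hn
    linarith [hforall n]
  -- final assembly
  refine ⟨4 * K, by linarith, ?_⟩
  intro w v hw hv hlen b
  obtain ⟨n, hnL, hnC⟩ := himg w hw
  obtain ⟨m, hmL, hmC⟩ := himg v hv
  set L : ℝ := ∑ a : A, α a * ((ψ a).length : ℝ)
  have hL0 : (0:ℝ) ≤ L := le_trans zero_le_one hL1
  have hbn := hnC b
  have hbm := hmC b
  set Bb : ℝ := ∑ a : A, α a * ((ψ a).count b : ℝ) with hBb
  have hBb0 : (0:ℝ) ≤ Bb := Finset.sum_nonneg fun a _ => mul_nonneg (hα0 a) (by positivity)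
  have hBbL : Bb ≤ L :=
    Finset.sum_le_sum fun a _ => mul_le_mul_of_nonneg_left
      (by exact_mod_cast List.count_le_length (a := b) (l := ψ a)) (hα0 a)
  have hvlen : ((v.length : ℕ) : ℝ) = ((w.length : ℕ) : ℝ) := by rw [hlen]
  rw [hvlen] at hmL
  have h1 : |L * n - L * m| ≤ 2 * K := by
    have a1 := abs_le.mp hnL
    have a2 := abs_le.mp hmL
    rw [abs_le]
    constructor <;> linarith [a1.1, a1.2, a2.1, a2.2]
  have h2 : |Bb * n - Bb * m| ≤ 2 * K := by
    calc |Bb * n - Bb * m| = Bb * |(n : ℝ) - m| := by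
          rw [← mul_sub, abs_mul, abs_of_nonneg hBb0]
      _ ≤ L * |(n : ℝ) - m| := mul_le_mul_of_nonneg_right hBbL (abs_nonneg _)
      _ = |L * n - L * m| := by rw [← mul_sub, abs_mul, abs_of_nonneg hL0]
      _ ≤ 2 * K := h1
  have t1 := abs_le.mp (hbn)
  have t2 := abs_le.mp (hbm)
  have t3 := abs_le.mp h2
  rw [abs_le]
  constructor <;> linarith [t1.1, t1.2, t2.1, t2.2, t3.1, t3.2]
end

section
/- A Delone set Λ ⊂ ℝ is bounded distance equivalent to the lattice ξℤ (ξ > 0) if and only if there exists K > 0 such that for every N > 0, |#(Λ ∩ [0,N)) − N/ξ| ≤ K and |#(Λ ∩ [−N,0)) − N/ξ| ≤ K. -/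
/-- A Delone set in ℝ: uniformly discrete and relatively dense. -/
def Delone (Λ : Set ℝ) : Prop :=
  (∃ r > 0, ∀ x ∈ Λ, ∀ y ∈ Λ, x ≠ y → r ≤ |x - y|) ∧
  (∃ R > 0, ∀ x : ℝ, ∃ y ∈ Λ, |x - y| ≤ R)

/-- `Λ` is bounded distance equivalent to `L`: there is a bijection between them
moving every point by less than some constant `C`. -/
def BDEquiv (Λ L : Set ℝ) : Prop :=
  ∃ C > 0, ∃ g : Λ → L, Function.Bijective g ∧ ∀ x : Λ, |(x : ℝ) - (g x : ℝ)| < C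

/-- The one-dimensional lattice `ξℤ`. -/
def lat (ξ : ℝ) : Set ℝ := {x : ℝ | ∃ n : ℤ, x = ξ * n}

/- ---------------- auxiliary lemmas ---------------- -/

lemma sep_finite {S : Set ℝ} {r : ℝ} (hr : 0 < r)
    (hsep : ∀ x ∈ S, ∀ y ∈ S, x ≠ y → r ≤ |x - y|) (a b : ℝ) :
    (S ∩ Set.Ico a b).Finite := by
  apply Set.Finite.of_finite_image (f := fun x => ⌊x / r⌋)
  · apply Set.Finite.subset (Set.finite_Icc ⌊a / r⌋ ⌊b / r⌋)
    rintro _ ⟨x, ⟨_, hxa, hxb⟩, rfl⟩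
    refine ⟨Int.floor_le_floor ((div_le_div_iff_of_pos_right hr).2 hxa), ?_⟩
    exact Int.floor_le_floor ((div_le_div_iff_of_pos_right hr).2 hxb.le)
  · intro x hx y hy hf
    by_contra hne
    have h2 := hsep x hx.1 y hy.1 hne
    have h1 : |x / r - y / r| < 1 := Int.abs_sub_lt_one_of_floor_eq_floor hf
    rw [div_sub_div_same, abs_div, abs_of_pos hr, div_lt_one hr] at h1
    linarith

lemma lat_sep {ξ : ℝ} (hξ : 0 < ξ) :
    ∀ x ∈ lat ξ, ∀ y ∈ lat ξ, x ≠ y → ξ ≤ |x - y| := by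
  rintro _ ⟨m, rfl⟩ _ ⟨n, rfl⟩ hne
  have hmn : m ≠ n := by rintro rfl; exact hne rfl
  have h1 : (1 : ℝ) ≤ |(m : ℝ) - n| := by
    have : (1 : ℤ) ≤ |m - n| := Int.one_le_abs (sub_ne_zero.2 hmn)
    calc (1:ℝ) = ((1:ℤ):ℝ) := by norm_num
    _ ≤ ((|m - n| : ℤ) : ℝ) := by exact_mod_cast this
    _ = |(m:ℝ) - n| := by push_cast [Int.cast_abs]; ring_nf
  have he : ξ * (m:ℝ) - ξ * n = ξ * ((m:ℝ) - n) := by ring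
  rw [he, abs_mul, abs_of_pos hξ]
  nlinarith

lemma lat_card {ξ : ℝ} (hξ : 0 < ξ) (a b : ℝ) (hab : a ≤ b) :
    |(Nat.card ↥(lat ξ ∩ Set.Ico a b) : ℝ) - (b - a) / ξ| ≤ 1 := by
  have hbij : Set.BijOn (fun n : ℤ => ξ * n) (Set.Ico ⌈a / ξ⌉ ⌈b / ξ⌉)
      (lat ξ ∩ Set.Ico a b) := by
    refine ⟨?_, ?_, ?_⟩
    · rintro n ⟨h1, h2⟩
      refine ⟨⟨n, rfl⟩, ?_, ?_⟩
      · show a ≤ ξ * (n : ℝ)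
        have h3 : a / ξ ≤ (n : ℝ) := le_trans (Int.le_ceil _) (by exact_mod_cast h1)
        rw [div_le_iff₀ hξ] at h3; linarith
      · show ξ * (n : ℝ) < b
        have h3 : (n : ℝ) < b / ξ := Int.lt_ceil.1 h2
        rw [lt_div_iff₀ hξ] at h3; linarith
    · intro m _ n _ h
      have : (m : ℝ) = n := mul_left_cancel₀ (ne_of_gt hξ) h
      exact_mod_cast this
    · rintro x ⟨⟨n, rfl⟩, hxa, hxb⟩
      refine ⟨n, ⟨?_, ?_⟩, rfl⟩
      · rw [Int.ceil_le, div_le_iff₀ hξ]; linarith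
      · rw [Int.lt_ceil, lt_div_iff₀ hξ]; linarith
  have hcard : Nat.card ↥(lat ξ ∩ Set.Ico a b) = (⌈b / ξ⌉ - ⌈a / ξ⌉).toNat := by
    rw [← Nat.card_congr (Set.BijOn.equiv _ hbij)]
    rw [Nat.card_coe_set_eq, ← Finset.coe_Ico, Set.ncard_coe_finset, Int.card_Ico]
  have hAB : ⌈a / ξ⌉ ≤ ⌈b / ξ⌉ := Int.ceil_le_ceil ((div_le_div_iff_of_pos_right hξ).2 hab)
  rw [hcard]
  have hz : ((⌈b / ξ⌉ - ⌈a / ξ⌉).toNat : ℤ) = ⌈b / ξ⌉ - ⌈a / ξ⌉ :=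
    Int.toNat_of_nonneg (sub_nonneg.2 hAB)
  have hc : (((⌈b / ξ⌉ - ⌈a / ξ⌉).toNat : ℕ) : ℝ) = (⌈b / ξ⌉ : ℝ) - (⌈a / ξ⌉ : ℝ) := by
    exact_mod_cast congrArg (fun z : ℤ => (z : ℝ)) hz
  rw [hc]
  have h1 : a / ξ ≤ (⌈a / ξ⌉ : ℝ) := Int.le_ceil _
  have h2 : ((⌈a / ξ⌉ : ℝ)) < a / ξ + 1 := Int.ceil_lt_add_one _
  have h3 : b / ξ ≤ (⌈b / ξ⌉ : ℝ) := Int.le_ceil _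
  have h4 : ((⌈b / ξ⌉ : ℝ)) < b / ξ + 1 := Int.ceil_lt_add_one _
  have h5 : (b - a) / ξ = b / ξ - a / ξ := by ring
  rw [abs_le]; constructor <;> [linarith; linarith]


lemma cSur {Λ : Set ℝ} {R : ℝ} (hR : 0 < R)
    (hfin : ∀ a b : ℝ, (Λ ∩ Set.Ico a b).Finite)
    (hdense : ∀ x : ℝ, ∃ y ∈ Λ, |x - y| ≤ R) :
    ∀ n : ℕ, ∃ x ∈ Λ, 0 ≤ x ∧ (Λ ∩ Set.Ico 0 x).ncard = n := by
  intro n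
  induction n with
  | zero =>
    obtain ⟨y, hy, hyd⟩ := hdense R
    rw [abs_le] at hyd
    have hymem : y ∈ Λ ∩ Set.Ico 0 (2 * R + 1) := ⟨hy, by constructor <;> linarith⟩
    obtain ⟨x, hx, hmin⟩ := Set.exists_min_image _ id (hfin 0 (2 * R + 1)) ⟨y, hymem⟩
    refine ⟨x, hx.1, hx.2.1, ?_⟩
    have hempty : Λ ∩ Set.Ico 0 x = ∅ := by
      ext z
      simp only [Set.mem_inter_iff, Set.mem_Ico, Set.mem_empty_iff_false, iff_false, not_and]
      intro hz hz0 hzx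
      have hle : x ≤ z := hmin z ⟨hz, hz0, by linarith [hx.2.2]⟩
      linarith
    rw [hempty, Set.ncard_empty]
  | succ n ih =>
    obtain ⟨x, hxΛ, hx0, hxc⟩ := ih
    obtain ⟨y, hy, hyd⟩ := hdense (x + R + 1)
    rw [abs_le] at hyd
    have hSfin : (Λ ∩ Set.Ioo x (x + 2 * R + 2)).Finite :=
      (hfin x (x + 2 * R + 2)).subset (fun z hz => ⟨hz.1, hz.2.1.le, hz.2.2⟩)
    have hymem : y ∈ Λ ∩ Set.Ioo x (x + 2 * R + 2) := ⟨hy, by constructor <;> linarith⟩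
    obtain ⟨x', hx', hmin⟩ := Set.exists_min_image _ id hSfin ⟨y, hymem⟩
    have hxx' : x < x' := hx'.2.1
    refine ⟨x', hx'.1, by linarith, ?_⟩
    have hset : Λ ∩ Set.Ico 0 x' = insert x (Λ ∩ Set.Ico 0 x) := by
      ext z
      simp only [Set.mem_inter_iff, Set.mem_Ico, Set.mem_insert_iff]
      constructor
      · rintro ⟨hz, hz0, hzx'⟩
        rcases lt_trichotomy z x with hlt | heq | hgt
        · right; exact ⟨hz, hz0, hlt⟩
        · left; exact heq
        · exfalso
          have hle : x' ≤ z := hmin z ⟨hz, hgt, by linarith [hx'.2.2]⟩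
          linarith
      · rintro (rfl | ⟨hz, hz0, hzx⟩)
        · exact ⟨hxΛ, hx0, hxx'⟩
        · exact ⟨hz, hz0, by linarith⟩
    rw [hset, Set.ncard_insert_of_notMem (fun hmem => lt_irrefl x hmem.2.2) (hfin 0 x), hxc]

lemma dSur {Λ : Set ℝ} {R : ℝ} (hR : 0 < R)
    (hfin : ∀ a b : ℝ, (Λ ∩ Set.Ico a b).Finite)
    (hdense : ∀ x : ℝ, ∃ y ∈ Λ, |x - y| ≤ R) :
    ∀ n : ℕ, ∃ x ∈ Λ, x < 0 ∧ (Λ ∩ Set.Ico x 0).ncard = n + 1 := by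
  intro n
  induction n with
  | zero =>
    obtain ⟨y, hy, hyd⟩ := hdense (-R - 1)
    rw [abs_le] at hyd
    have hymem : y ∈ Λ ∩ Set.Ico (-(2 * R + 1)) 0 := ⟨hy, by constructor <;> linarith⟩
    obtain ⟨x, hx, hmax⟩ := Set.exists_max_image _ id (hfin (-(2 * R + 1)) 0) ⟨y, hymem⟩
    refine ⟨x, hx.1, hx.2.2, ?_⟩
    have hone : Λ ∩ Set.Ico x 0 = {x} := by
      ext z
      simp only [Set.mem_inter_iff, Set.mem_Ico, Set.mem_singleton_iff]
      constructor
      · rintro ⟨hz, hzx, hz0⟩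
        have hle : z ≤ x := hmax z ⟨hz, by linarith [hx.2.1], hz0⟩
        linarith
      · rintro rfl
        exact ⟨hx.1, le_refl _, hx.2.2⟩
    rw [hone, Set.ncard_singleton]
  | succ n ih =>
    obtain ⟨x, hxΛ, hx0, hxc⟩ := ih
    obtain ⟨y, hy, hyd⟩ := hdense (x - R - 1)
    rw [abs_le] at hyd
    have hymem : y ∈ Λ ∩ Set.Ico (x - (2 * R + 1)) x := ⟨hy, by constructor <;> linarith⟩
    obtain ⟨x', hx', hmax⟩ := Set.exists_max_image _ id (hfin (x - (2 * R + 1)) x) ⟨y, hymem⟩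
    have hxx' : x' < x := hx'.2.2
    refine ⟨x', hx'.1, by linarith, ?_⟩
    have hset : Λ ∩ Set.Ico x' 0 = insert x' (Λ ∩ Set.Ico x 0) := by
      ext z
      simp only [Set.mem_inter_iff, Set.mem_Ico, Set.mem_insert_iff]
      constructor
      · rintro ⟨hz, hzx', hz0⟩
        rcases lt_or_ge z x with hlt | hge
        · left
          have hle : z ≤ x' := hmax z ⟨hz, by linarith [hx'.2.1], hlt⟩
          linarith
        · right; exact ⟨hz, hge, hz0⟩
      · rintro (rfl | ⟨hz, hzx, hz0⟩)
        · exact ⟨hx'.1, le_refl _, by linarith⟩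
        · exact ⟨hz, by linarith, hz0⟩
    rw [hset, Set.ncard_insert_of_notMem (fun hmem => absurd hmem.2.1 (not_le.2 hxx'))
      (hfin x 0), hxc]

lemma forward_count {Λ : Set ℝ} {ξ C : ℝ} (hξ : 0 < ξ) (hC : 0 < C)
    (hfin : ∀ a b : ℝ, (Λ ∩ Set.Ico a b).Finite)
    (e : ↥Λ ≃ ↥(lat ξ)) (hd : ∀ x : ↥Λ, |(x : ℝ) - ((e x : ℝ))| < C)
    (a b : ℝ) (hab : a ≤ b) :
    |(Nat.card ↥(Λ ∩ Set.Ico a b) : ℝ) - (b - a) / ξ| ≤ 2 * C / ξ + 2 := by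
  have latfin : ∀ u v : ℝ, (lat ξ ∩ Set.Ico u v).Finite :=
    fun u v => sep_finite hξ (lat_sep hξ) u v
  -- upper bound
  have hup : Nat.card ↥(Λ ∩ Set.Ico a b) ≤ Nat.card ↥(lat ξ ∩ Set.Ico (a - C) (b + C)) := by
    have : Finite ↥(lat ξ ∩ Set.Ico (a - C) (b + C)) := (latfin _ _).to_subtype
    refine Nat.card_le_card_of_injective
      (fun x => ⟨(e ⟨x.1, x.2.1⟩ : ℝ), (e ⟨x.1, x.2.1⟩).2, ?_, ?_⟩) ?_
    · have h1 := hd ⟨x.1, x.2.1⟩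
      have h2 := x.2.2
      rw [abs_lt] at h1
      have := h2.1; linarith [h1.1, h1.2]
    · have h1 := hd ⟨x.1, x.2.1⟩
      have h2 := x.2.2
      rw [abs_lt] at h1
      have := h2.2; linarith [h1.1, h1.2]
    · intro x y hxy
      simp only [Subtype.mk.injEq] at hxy
      have h3 := e.injective (Subtype.ext (by have h0 := Subtype.ext_iff.1 hxy; exact h0))
      have h4 := Subtype.ext_iff.1 h3
      exact Subtype.ext h4
  have hlat1 := lat_card hξ (a - C) (b + C) (by linarith)
  -- lower bound
  have key2 : (b - a) / ξ - (Nat.card ↥(Λ ∩ Set.Ico a b) : ℝ) ≤ 2 * C / ξ + 1 := by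
    by_cases h2C : a + C ≤ b - C
    · have hlo : Nat.card ↥(lat ξ ∩ Set.Ico (a + C) (b - C)) ≤
          Nat.card ↥(Λ ∩ Set.Ico a b) := by
        have : Finite ↥(Λ ∩ Set.Ico a b) := (hfin a b).to_subtype
        refine Nat.card_le_card_of_injective
          (fun y => ⟨(e.symm ⟨y.1, y.2.1⟩ : ℝ), (e.symm ⟨y.1, y.2.1⟩).2, ?_, ?_⟩) ?_
        · have h1 := hd (e.symm ⟨y.1, y.2.1⟩)
          rw [e.apply_symm_apply] at h1
          rw [abs_lt] at h1
          have := y.2.2.1; linarith [h1.1, h1.2]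
        · have h1 := hd (e.symm ⟨y.1, y.2.1⟩)
          rw [e.apply_symm_apply] at h1
          rw [abs_lt] at h1
          have := y.2.2.2; linarith [h1.1, h1.2]
        · intro x y hxy
          simp only [Subtype.mk.injEq] at hxy
          have h3 := e.symm.injective (Subtype.ext (by have h0 := Subtype.ext_iff.1 hxy; exact h0))
          have h4 := Subtype.ext_iff.1 h3
          exact Subtype.ext h4
      have hlat2 := lat_card hξ (a + C) (b - C) h2C
      rw [abs_le] at hlat2
      have hd1 : (b - C - (a + C)) / ξ = (b - a) / ξ - 2 * C / ξ := by ring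
      have hcast : (Nat.card ↥(lat ξ ∩ Set.Ico (a + C) (b - C)) : ℝ) ≤
          (Nat.card ↥(Λ ∩ Set.Ico a b) : ℝ) := by exact_mod_cast hlo
      linarith [hlat2.1]
    · push_neg at h2C
      have hba : (b - a) / ξ < 2 * C / ξ := (div_lt_div_iff_of_pos_right hξ).2 (by linarith)
      have : (0:ℝ) ≤ (Nat.card ↥(Λ ∩ Set.Ico a b) : ℝ) := Nat.cast_nonneg _
      linarith
  rw [abs_le] at hlat1 ⊢
  have hupc : (Nat.card ↥(Λ ∩ Set.Ico a b) : ℝ) ≤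
      (Nat.card ↥(lat ξ ∩ Set.Ico (a - C) (b + C)) : ℝ) := by exact_mod_cast hup
  have hd2 : (b + C - (a - C)) / ξ = (b - a) / ξ + 2 * C / ξ := by ring
  have hCpos : 0 < 2 * C / ξ := by positivity
  constructor
  · linarith [key2]
  · linarith [hlat1.2]


/-- a Delone set `Λ ⊂ ℝ` is bounded distance equivalent to `ξℤ`
(`ξ > 0`) iff the counts of `Λ` in `[0,N)` and `[-N,0)` differ from `N/ξ` by a
uniformly bounded amount. -/
theorem bdl_iff_bounded_discrepancy (Λ : Set ℝ) (hΛ : Delone Λ) (ξ : ℝ) (hξ : 0 < ξ) :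
    BDEquiv Λ (lat ξ) ↔
      ∃ K > 0, ∀ N : ℝ, 0 < N →
        |(Nat.card ↥(Λ ∩ Set.Ico 0 N) : ℝ) - N / ξ| ≤ K ∧
        |(Nat.card ↥(Λ ∩ Set.Ico (-N) 0) : ℝ) - N / ξ| ≤ K := by
  obtain ⟨⟨r, hr, hsep⟩, ⟨R, hR, hdense⟩⟩ := hΛ
  have hfin : ∀ a b : ℝ, (Λ ∩ Set.Ico a b).Finite := sep_finite hr hsep
  constructor
  · rintro ⟨C, hC, g, hgbij, hgd⟩
    set e := Equiv.ofBijective g hgbij with he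
    have hd : ∀ x : ↥Λ, |(x : ℝ) - (e x : ℝ)| < C := hgd
    refine ⟨2 * C / ξ + 2, by positivity, fun N hN => ⟨?_, ?_⟩⟩
    · have h1 := forward_count hξ hC hfin e hd 0 N (le_of_lt hN)
      rw [sub_zero] at h1
      exact h1
    · have h1 := forward_count hξ hC hfin e hd (-N) 0 (by linarith)
      have h0 : (0 - -N) = N := by ring
      rw [h0] at h1
      exact h1
  · rintro ⟨K, hK, hbound⟩
    classical
    set c : ℝ → ℕ := fun t => (Λ ∩ Set.Ico 0 t).ncard with hc
    set d : ℝ → ℕ := fun t => (Λ ∩ Set.Ico t 0).ncard with hdd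
    set h : ℝ → ℤ := fun x => if 0 ≤ x then (c x : ℤ) else -(d x : ℤ) with hh
    -- monotonicity
    have hmonoc : ∀ x ∈ Λ, ∀ y ∈ Λ, 0 ≤ x → x < y → c x < c y := by
      intro x hx y hy hx0 hxy
      apply Set.ncard_lt_ncard _ (hfin 0 y)
      constructor
      · exact Set.inter_subset_inter_right _ (Set.Ico_subset_Ico le_rfl hxy.le)
      · intro hsub
        have := hsub ⟨hx, hx0, hxy⟩
        exact lt_irrefl x this.2.2
    have hmonod : ∀ x ∈ Λ, ∀ y ∈ Λ, x < y → y < 0 → d y < d x := by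
      intro x hx y hy hxy hy0
      apply Set.ncard_lt_ncard _ (hfin x 0)
      constructor
      · exact Set.inter_subset_inter_right _ (Set.Ico_subset_Ico hxy.le le_rfl)
      · intro hsub
        have hx0 : x < 0 := lt_trans hxy hy0
        have := hsub ⟨hx, le_rfl, hx0⟩
        exact absurd this.2.1 (not_le.2 hxy)
    have hd1 : ∀ x ∈ Λ, x < 0 → 1 ≤ d x := by
      intro x hx hx0
      have : (Λ ∩ Set.Ico x 0).Nonempty := ⟨x, hx, le_rfl, hx0⟩
      exact (Set.ncard_pos (hfin x 0)).2 this
    -- injectivity of h on Λ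
    have hlt : ∀ x ∈ Λ, ∀ y ∈ Λ, x < y → h x < h y := by
      intro x hx y hy hxy
      rcases le_or_gt 0 x with hx0 | hx0
      · have hy0 : 0 ≤ y := by linarith
        rw [hh]; simp only [if_pos hx0, if_pos hy0]
        exact_mod_cast hmonoc x hx y hy hx0 hxy
      · rcases le_or_gt 0 y with hy0 | hy0
        · rw [hh]; simp only [if_neg (not_le.2 hx0), if_pos hy0]
          have := hd1 x hx hx0
          have : (1 : ℤ) ≤ (d x : ℤ) := by exact_mod_cast this
          have : (0 : ℤ) ≤ (c y : ℤ) := Int.natCast_nonneg _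
          omega
        · rw [hh]; simp only [if_neg (not_le.2 hx0), if_neg (not_le.2 hy0)]
          have := hmonod x hx y hy hxy hy0
          omega
    have hinj : ∀ x ∈ Λ, ∀ y ∈ Λ, h x = h y → x = y := by
      intro x hx y hy hxy
      rcases lt_trichotomy x y with hlt' | heq | hlt'
      · exact absurd hxy (ne_of_lt (hlt x hx y hy hlt'))
      · exact heq
      · exact absurd hxy.symm (ne_of_lt (hlt y hy x hx hlt'))
    -- the bijection
    set g : ↥Λ → ↥(lat ξ) := fun x => ⟨ξ * (h x.1 : ℝ), ⟨h x.1, rfl⟩⟩ with hg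
    have hginj : Function.Injective g := by
      intro x y hxy
      simp only [hg, Subtype.mk.injEq] at hxy
      have h2 : ((h x.1 : ℤ) : ℝ) = ((h y.1 : ℤ) : ℝ) := mul_left_cancel₀ (ne_of_gt hξ) (congrArg Subtype.val hxy)
      have h3 : h x.1 = h y.1 := by exact_mod_cast h2
      exact Subtype.ext (hinj x.1 x.2 y.1 y.2 h3)
    have hgsur : Function.Surjective g := by
      rintro ⟨yv, n, hn⟩
      rcases le_or_gt 0 n with hn0 | hn0
      · obtain ⟨x, hxΛ, hx0, hxc⟩ := cSur hR hfin hdense n.toNat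
        refine ⟨⟨x, hxΛ⟩, Subtype.ext ?_⟩
        show ξ * (h x : ℝ) = yv
        have hhx : h x = n := by
          rw [hh]; simp only [if_pos hx0]
          have hcx : c x = n.toNat := hxc
          omega
        rw [hhx, hn]
      · obtain ⟨x, hxΛ, hx0, hxc⟩ := dSur hR hfin hdense ((-n).toNat - 1)
        refine ⟨⟨x, hxΛ⟩, Subtype.ext ?_⟩
        show ξ * (h x : ℝ) = yv
        have hhx : h x = n := by
          rw [hh]; simp only [if_neg (not_le.2 hx0)]
          have hdx : d x = (-n).toNat - 1 + 1 := hxc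
          omega
        rw [hhx, hn]
    -- the distance bound
    have hb : ∀ x : ↥Λ, |(x : ℝ) - ξ * (h x.1 : ℝ)| ≤ ξ * K := by
      rintro ⟨x, hx⟩
      rcases lt_trichotomy x 0 with hx0 | hx0 | hx0
      · have hb2 := (hbound (-x) (by linarith)).2
        rw [neg_neg, Nat.card_coe_set_eq] at hb2
        have hhx : h x = -(d x : ℤ) := by rw [hh]; simp only [if_neg (not_le.2 hx0)]
        have he2 : (x : ℝ) - ξ * ((h x : ℤ) : ℝ) = ξ * (((d x : ℕ) : ℝ) - (-x) / ξ) := by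
          rw [hhx]; push_cast; field_simp; ring
        rw [he2, abs_mul, abs_of_pos hξ]
        exact mul_le_mul_of_nonneg_left hb2 (le_of_lt hξ)
      · subst hx0
        have hc0 : c 0 = 0 := by
          rw [hc]; simp only [Set.Ico_self, Set.inter_empty, Set.ncard_empty]
        have hhx : h 0 = 0 := by rw [hh]; simp [hc0]
        rw [hhx]
        simp only [Int.cast_zero, mul_zero, sub_zero, abs_zero]
        positivity
      · have hb1 := (hbound x hx0).1
        rw [Nat.card_coe_set_eq] at hb1
        have hhx : h x = (c x : ℤ) := by rw [hh]; simp only [if_pos hx0.le]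
        have he2 : (x : ℝ) - ξ * ((h x : ℤ) : ℝ) = -(ξ * (((c x : ℕ) : ℝ) - x / ξ)) := by
          rw [hhx]; push_cast; field_simp; ring
        rw [he2, abs_neg, abs_mul, abs_of_pos hξ]
        exact mul_le_mul_of_nonneg_left hb1 (le_of_lt hξ)
    exact ⟨ξ * K + 1, by positivity, g, ⟨hginj, hgsur⟩,
      fun x => lt_of_le_of_lt (hb x) (by linarith)⟩
end

section
/- Let φ be a substitution over a d-letter alphabet A whose incidence matrix M has at least one eigenvalue of modulus less than 1, and let u be a bidirectional fixed point of φ. Then there exist a vector f ∈ ℝ^d linearly independent of (1,…,1)^T and a constant K > 0 such that |f^T P[n]| ≤ K for every n ∈ ℤ, where P[n] is the signed Parikh vector of u. -/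
/-- `φ` is a substitution: a non-erasing morphism (given by its values on letters)
with letters `a`, `b` such that `φ(a) = a·w` and `φ(b) = v·b` for nonempty `w`, `v`. -/
def IsSubstitution {A : Type*} (φ : A → List A) : Prop :=
  (∀ a : A, φ a ≠ []) ∧
  (∃ a : A, ∃ w : List A, w ≠ [] ∧ φ a = a :: w) ∧
  (∃ b : A, ∃ v : List A, v ≠ [] ∧ φ b = v ++ [b])

/-- `u : ℤ → A` is a bidirectional fixed point of `φ`: there is a tiling of `ℤ`
by consecutive blocks (with block boundaries `k n`, `k 0 = 0`) such that the `n`-th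
block of `u` equals `φ(u_n)`; i.e. `φ(u) = u` with the delimiter at position 0. -/
def IsBidirFixedPoint {A : Type*} (φ : A → List A) (u : ℤ → A) : Prop :=
  ∃ k : ℤ → ℤ, k 0 = 0 ∧
    (∀ n : ℤ, k (n + 1) = k n + (φ (u n)).length) ∧
    (∀ n : ℤ, (List.range (φ (u n)).length).map (fun j => u (k n + j)) = φ (u n))

/-- Signed Parikh count (the `a`-entry of the signed Parikh vector `P[n]`). -/
def sCount {A : Type*} [DecidableEq A] (u : ℤ → A) (a : A) (n : ℤ) : ℤ :=
  if 0 ≤ n then (((List.range n.toNat).map (fun k => u k)).count a : ℤ)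
  else -((((List.range (-n).toNat).map (fun k => u (n + k))).count a : ℤ))

set_option linter.unusedSectionVars false

section Aux
variable {A : Type*} [DecidableEq A]

lemma flatMap_singleton_map {α β : Type*} (l : List α) (f : α → β) :
    l.flatMap (fun a => [f a]) = l.map f := by
  induction l <;> simp_all

/-- window of `u` starting at `m` of length `L` -/
def Wnd (u : ℤ → A) (m : ℤ) (L : ℕ) : List A :=
  (List.range L).map fun j : ℕ => u (m + (j : ℤ))

lemma Wnd_snoc (u : ℤ → A) (m : ℤ) (L : ℕ) :
    Wnd u m (L + 1) = Wnd u m L ++ [u (m + L)] := by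
  simp [Wnd, List.range_succ]

lemma Wnd_cons (u : ℤ → A) (m : ℤ) (L : ℕ) :
    Wnd u m (L + 1) = u m :: Wnd u (m + 1) L := by
  unfold Wnd
  rw [List.range_succ_eq_map, List.map_cons, List.map_map]
  refine congrArg₂ _ (by simp) (List.map_congr_left fun j _ => ?_)
  simp only [Function.comp_apply]
  congr 1
  push_cast
  ring

lemma sCount_eq_Wnd (u : ℤ → A) (a : A) (n : ℤ) :
    sCount u a n = if 0 ≤ n then ((Wnd u 0 n.toNat).count a : ℤ)
      else -(((Wnd u n (-n).toNat).count a : ℤ)) := by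
  simp [sCount, Wnd, flatMap_singleton_map, Function.comp_def]

lemma sCount_zero (u : ℤ → A) (a : A) : sCount u a 0 = 0 := by
  simp [sCount]

lemma sCount_succ (u : ℤ → A) (a : A) (n : ℤ) :
    sCount u a (n + 1) = sCount u a n + (if u n = a then 1 else 0) := by
  rcases le_or_gt 0 n with h | h
  · have h1 : (0:ℤ) ≤ n + 1 := by omega
    have h2 : (n+1).toNat = n.toNat + 1 := by omega
    rw [sCount_eq_Wnd, sCount_eq_Wnd, if_pos h1, if_pos h, h2, Wnd_snoc,
      List.count_append]
    have h3 : (0 : ℤ) + n.toNat = n := by omega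
    rw [h3]
    rcases eq_or_ne (u n) a with he | he
    · simp [he]
    · simp [he, Ne.symm he]
  · rcases eq_or_lt_of_le (by omega : n + 1 ≤ 0) with h1 | h1
    · have hn : n = -1 := by omega
      subst hn
      rw [sCount_eq_Wnd, sCount_eq_Wnd, if_pos (by norm_num), if_neg (by norm_num)]
      have h4 : Wnd u (-1) ((-(-1:ℤ)).toNat) = [u (-1)] := by
        simp [Wnd, List.range_succ]
      rw [h4]
      rcases eq_or_ne (u (-1)) a with he | he
      · simp [Wnd, he]
      · simp [Wnd, he, Ne.symm he]
    · have h2 : (-n).toNat = (-(n+1)).toNat + 1 := by omega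
      rw [sCount_eq_Wnd, sCount_eq_Wnd, if_neg (by omega), if_neg (by omega), h2,
        Wnd_cons, List.count_cons]
      rcases eq_or_ne (u n) a with he | he
      · simp [he]; try push_cast; try ring
      · simp [he, Ne.symm he]

lemma sCount_add (u : ℤ → A) (a : A) (m : ℤ) (L : ℕ) :
    sCount u a (m + L) = sCount u a m + ((Wnd u m L).count a : ℤ) := by
  induction L with
  | zero => simp [Wnd]
  | succ L ih =>
      have h1 : m + ((L + 1 : ℕ) : ℤ) = (m + L) + 1 := by push_cast; ring
      rw [h1, sCount_succ, ih, Wnd_snoc, List.count_append]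
      rcases eq_or_ne (u (m + L)) a with he | he
      · simp [he]; try push_cast; try ring
      · simp [he, Ne.symm he]

lemma list_length_eq_sum_count [Fintype A] (l : List A) :
    ∑ a : A, l.count a = l.length := by
  induction l with
  | nil => simp
  | cons x l ih =>
      simp only [List.count_cons, List.length_cons, Finset.sum_add_distrib, ih]
      simp [Finset.sum_ite_eq']

end Aux

/-- if the incidence matrix `M_{ba} = |φ(a)|_b` of a substitution `φ`
has an eigenvalue of modulus `< 1`, and `u` is a bidirectional fixed point of `φ`,
then there are a vector `f` linearly independent of `(1,…,1)` (i.e. non-constant)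
and `K > 0` with `|fᵀ P[n]| ≤ K` for all `n ∈ ℤ`. -/
theorem bounded_form_of_small_eigenvalue {A : Type*} [Fintype A] [DecidableEq A]
    (φ : A → List A) (hφ : IsSubstitution φ)
    (heig : ∃ μ : ℂ, ‖μ‖ < 1 ∧ ∃ v : A → ℂ, v ≠ 0 ∧
      (Matrix.of fun b a : A => ((φ a).count b : ℂ)).mulVec v = μ • v)
    (u : ℤ → A) (hu : IsBidirFixedPoint φ u) :
    ∃ f : A → ℝ, (¬ ∃ t : ℝ, ∀ a : A, f a = t) ∧
      ∃ K > 0, ∀ n : ℤ, |∑ a : A, f a * (sCount u a n : ℝ)| ≤ K := by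
  obtain ⟨k, hk0, hk1, hk3⟩ := hu
  obtain ⟨μ, hμ, v, hv0, hv⟩ := heig
  set M : Matrix A A ℂ := Matrix.of fun b a : A => ((φ a).count b : ℂ) with hM
  -- block lengths are positive
  have hlen : ∀ x : A, 1 ≤ (φ x).length := fun x =>
    List.length_pos_iff.mpr (hφ.1 x)
  have klt : ∀ n : ℤ, k n < k (n + 1) := by
    intro n
    have h1 := hk1 n
    have h2 := hlen (u n)
    omega
  -- block counts
  have hblock : ∀ (n : ℤ) (a : A),
      (Wnd u (k n) (φ (u n)).length).count a = (φ (u n)).count a := by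
    intro n a
    have h' : Wnd u (k n) ((φ (u n)).length) = φ (u n) := by
      rw [← hk3 n]
      simp [Wnd, flatMap_singleton_map, Function.comp_def]
    rw [h']
  -- P[k m] = M P[m]
  have hP : ∀ (m : ℤ) (a : A),
      sCount u a (k m) = ∑ b : A, ((φ b).count a : ℤ) * sCount u b m := by
    intro m
    induction m using Int.induction_on with
    | zero => intro a; simp [hk0, sCount_zero]
    | succ i ih =>
        intro a
        have e1 : k ((i : ℤ) + 1) = k i + ((φ (u i)).length : ℤ) := hk1 i
        have e2 : sCount u a (k ((i : ℤ) + 1))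
            = sCount u a (k i) + ((φ (u i)).count a : ℤ) := by
          rw [e1, sCount_add, hblock]
        rw [e2, ih a]
        have e3 : ∀ b : A, sCount u b ((i : ℤ) + 1)
            = sCount u b i + (if u i = b then 1 else 0) := fun b => sCount_succ u b i
        simp only [e3, mul_add, Finset.sum_add_distrib, mul_ite, mul_one, mul_zero,
          Finset.sum_ite_eq, Finset.mem_univ, if_true]
    | pred i ih =>
        intro a
        have e1 : k (-(i : ℤ)) = k (-(i : ℤ) - 1) + ((φ (u (-(i : ℤ) - 1))).length : ℤ) := by
          have := hk1 (-(i : ℤ) - 1)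
          rw [show -(i : ℤ) - 1 + 1 = -(i : ℤ) by ring] at this
          exact this
        have e2 : sCount u a (k (-(i : ℤ)))
            = sCount u a (k (-(i : ℤ) - 1)) + ((φ (u (-(i : ℤ) - 1))).count a : ℤ) := by
          rw [e1, sCount_add, hblock]
        have e3 : ∀ b : A, sCount u b (-(i : ℤ))
            = sCount u b (-(i : ℤ) - 1) + (if u (-(i : ℤ) - 1) = b then 1 else 0) := by
          intro b
          have := sCount_succ u b (-(i : ℤ) - 1)
          rw [show -(i : ℤ) - 1 + 1 = -(i : ℤ) by ring] at this
          exact this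
        have := ih a
        rw [e2] at this
        simp only [e3, mul_add, Finset.sum_add_distrib, mul_ite, mul_one, mul_zero,
          Finset.sum_ite_eq, Finset.mem_univ, if_true] at this
        omega
  -- existence of the enclosing block index
  have hmexpos : ∀ N : ℕ, ∃ m : ℤ, 0 ≤ m ∧ m ≤ N ∧ k m ≤ N ∧ (N : ℤ) < k (m + 1) := by
    intro N
    induction N with
    | zero =>
        exact ⟨0, le_refl _, le_refl _, by simp [hk0], by simpa [hk0] using klt 0⟩
    | succ N ihN =>
        obtain ⟨m, h1, h2, h3, h4⟩ := ihN
        rcases lt_or_ge ((N : ℤ) + 1) (k (m + 1)) with h5 | h5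
        · exact ⟨m, h1, by push_cast; omega, by push_cast; omega, by push_cast; omega⟩
        · refine ⟨m + 1, by omega, by push_cast; omega, by push_cast; omega, ?_⟩
          have := klt (m + 1)
          push_cast
          omega
  have hmexneg : ∀ N : ℕ, ∃ m : ℤ, -(N : ℤ) ≤ m ∧ m ≤ 0 ∧ k m ≤ -(N : ℤ) ∧ -(N : ℤ) < k (m + 1) := by
    intro N
    induction N with
    | zero =>
        exact ⟨0, by simp, le_refl _, by simp [hk0], by simpa [hk0] using klt 0⟩
    | succ N ihN =>
        obtain ⟨m, h1, h2, h3, h4⟩ := ihN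
        rcases le_or_gt (k m) (-(N : ℤ) - 1) with h5 | h5
        · exact ⟨m, by push_cast; omega, h2, by push_cast; omega, by push_cast; omega⟩
        · refine ⟨m - 1, by push_cast; omega, by omega, ?_, ?_⟩
          · have := klt (m - 1)
            rw [show m - 1 + 1 = m by ring] at this
            push_cast
            omega
          · rw [show m - 1 + 1 = m by ring]
            push_cast
            omega
  have hmex : ∀ n : ℤ, ∃ m : ℤ, k m ≤ n ∧ n < k (m + 1) ∧ (m = n ∨ m.natAbs < n.natAbs) := by
    intro n
    rcases le_or_gt 0 n with h | h
    · obtain ⟨m, h1, h2, h3, h4⟩ := hmexpos n.toNat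
      rw [Int.toNat_of_nonneg h] at h2 h3 h4
      exact ⟨m, h3, h4, by omega⟩
    · obtain ⟨m, h1, h2, h3, h4⟩ := hmexneg (-n).toNat
      rw [Int.toNat_of_nonneg (by omega), neg_neg] at h1 h3 h4
      exact ⟨m, h3, h4, by omega⟩
  -- left eigenvector
  have hdet : (M - μ • 1).det = 0 := by
    rw [← Matrix.exists_mulVec_eq_zero_iff]
    refine ⟨v, hv0, ?_⟩
    rw [Matrix.sub_mulVec, hv, Matrix.smul_mulVec, Matrix.one_mulVec, sub_self]
  obtain ⟨g, hg0, hgv⟩ := Matrix.exists_vecMul_eq_zero_iff.mpr hdet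
  have hs : Matrix.vecMul g (μ • (1 : Matrix A A ℂ)) = μ • g := by
    funext b
    simp [Matrix.vecMul, dotProduct, Matrix.one_apply, mul_ite,
      Finset.sum_ite_eq, mul_comm]
  have h' : Matrix.vecMul g M = μ • g := by
    have h'' := hgv
    rwa [Matrix.vecMul_sub, hs, sub_eq_zero] at h''
  have hg : ∀ b : A, ∑ a : A, ((φ b).count a : ℂ) * g a = μ * g b := by
    intro b
    have h2 := congrFun h' b
    simp only [Matrix.vecMul, dotProduct, Pi.smul_apply, smul_eq_mul, hM,
      Matrix.of_apply] at h2
    rw [← h2]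
    exact Finset.sum_congr rfl fun a _ => mul_comm _ _
  -- g is not constant
  have hgnc : ¬ ∃ t : ℂ, ∀ a : A, g a = t := by
    rintro ⟨t, ht⟩
    obtain ⟨a0, ha0⟩ := Function.ne_iff.mp hg0
    have ht0 : t ≠ 0 := by rw [← ht a0]; simpa using ha0
    have h := hg a0
    simp only [ht] at h
    rw [← Finset.sum_mul] at h
    have h2 : (∑ a : A, ((φ a0).count a : ℂ)) = μ := by
      exact (mul_left_inj' ht0).mp h
    have h3 : (∑ a : A, ((φ a0).count a : ℂ)) = ((φ a0).length : ℂ) := by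
      rw [← list_length_eq_sum_count (φ a0)]
      push_cast
      rfl
    rw [h3] at h2
    have h4 : ‖μ‖ = ((φ a0).length : ℝ) := by
      rw [← h2]
      simp
    have := hlen a0
    rw [h4] at hμ
    have : (1 : ℝ) ≤ ((φ a0).length : ℝ) := by exact_mod_cast hlen a0
    linarith
  -- the bounded complex linear form
  set G : ℤ → ℂ := fun n => ∑ a : A, g a * (sCount u a n : ℂ) with hG
  have hGk : ∀ m : ℤ, G (k m) = μ * G m := by
    intro m
    rw [hG]
    simp only
    calc ∑ a : A, g a * (sCount u a (k m) : ℂ)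
        = ∑ a : A, g a * ∑ b : A, ((φ b).count a : ℂ) * (sCount u b m : ℂ) := by
          refine Finset.sum_congr rfl fun a _ => ?_
          rw [hP m a]
          push_cast
          ring_nf
      _ = ∑ b : A, (∑ a : A, ((φ b).count a : ℂ) * g a) * (sCount u b m : ℂ) := by
          simp only [Finset.mul_sum, Finset.sum_mul]
          rw [Finset.sum_comm]
          refine Finset.sum_congr rfl fun b _ => Finset.sum_congr rfl fun a _ => by ring
      _ = ∑ b : A, (μ * g b) * (sCount u b m : ℂ) := by
          exact Finset.sum_congr rfl fun b _ => by rw [hg b]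
      _ = μ * G m := by rw [hG]; simp only [Finset.mul_sum]; exact Finset.sum_congr rfl fun b _ => by ring
  -- constants
  set Lmax : ℕ := Finset.univ.sup fun a : A => (φ a).length with hLmax
  set C : ℝ := (∑ a : A, ‖g a‖) * Lmax with hC
  have hC0 : 0 ≤ C := by
    apply mul_nonneg
    · exact Finset.sum_nonneg fun a _ => norm_nonneg _
    · positivity
  have hμ1 : 0 < 1 - ‖μ‖ := by
    have : ‖μ‖ < 1 := hμ
    linarith
  set K : ℝ := C / (1 - ‖μ‖) with hK
  have hK0 : 0 ≤ K := div_nonneg hC0 (le_of_lt hμ1)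
  -- remainder bound
  have hrem : ∀ n m : ℤ, k m ≤ n → n < k (m + 1) →
      ‖G n - G (k m)‖ ≤ C := by
    intro n m h1 h2
    have hn : n = k m + ((n - k m).toNat : ℤ) := by omega
    have hGn : G n - G (k m) = ∑ a : A, g a * (((Wnd u (k m) (n - k m).toNat).count a : ℤ) : ℂ) := by
      rw [hG]
      simp only
      rw [← Finset.sum_sub_distrib]
      refine Finset.sum_congr rfl fun a _ => ?_
      have hsa := sCount_add u a (k m) (n - k m).toNat
      rw [← hn] at hsa
      rw [hsa]
      push_cast
      ring
    rw [hGn]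
    calc ‖∑ a : A, g a * (((Wnd u (k m) (n - k m).toNat).count a : ℤ) : ℂ)‖
        ≤ ∑ a : A, ‖g a * (((Wnd u (k m) (n - k m).toNat).count a : ℤ) : ℂ)‖ := by
          exact norm_sum_le _ _
      _ ≤ ∑ a : A, ‖g a‖ * Lmax := by
          refine Finset.sum_le_sum fun a _ => ?_
          rw [norm_mul]
          refine mul_le_mul_of_nonneg_left ?_ (norm_nonneg _)
          have hcount : (Wnd u (k m) (n - k m).toNat).count a ≤ Lmax := by
            calc (Wnd u (k m) (n - k m).toNat).count a
                ≤ (Wnd u (k m) (n - k m).toNat).length := List.count_le_length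
              _ = (n - k m).toNat := by simp [Wnd]
              _ ≤ (φ (u m)).length := by
                  have := hk1 m
                  omega
              _ ≤ Lmax := Finset.le_sup (f := fun a : A => (φ a).length) (Finset.mem_univ (u m))
          have : ‖((((Wnd u (k m) (n - k m).toNat).count a : ℤ)) : ℂ)‖
              = (((Wnd u (k m) (n - k m).toNat).count a : ℕ) : ℝ) := by
            rw [Complex.norm_intCast]
            push_cast
            simp
          rw [this]
          exact_mod_cast hcount
      _ = C := by rw [hC, ← Finset.sum_mul]
  -- main bound by strong induction on |n|
  have main : ∀ N : ℕ, ∀ n : ℤ, n.natAbs ≤ N → ‖G n‖ ≤ K := by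
    intro N
    induction N with
    | zero =>
        intro n hn
        have : n = 0 := by omega
        subst this
        rw [hG]
        simp [sCount_zero]
        exact hK0
    | succ N ihN =>
        intro n hn
        obtain ⟨m, h1, h2, h3⟩ := hmex n
        have hGn : ‖G n‖ ≤ ‖μ‖ * ‖G m‖ + C := by
          calc ‖G n‖ = ‖G (k m) + (G n - G (k m))‖ := by ring_nf
            _ ≤ ‖G (k m)‖ + ‖G n - G (k m)‖ := norm_add_le _ _
            _ ≤ ‖G (k m)‖ + C := by linarith [hrem n m h1 h2]
            _ = ‖μ‖ * ‖G m‖ + C := by rw [hGk m, norm_mul]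
        rcases h3 with rfl | hlt
        · have h4 : (1 - ‖μ‖) * ‖G m‖ ≤ C := by nlinarith [norm_nonneg (G m)]
          rw [hK, le_div_iff₀ hμ1]
          linarith
        · have h5 : ‖G m‖ ≤ K := ihN m (by omega)
          have h6 : ‖μ‖ * K + C ≤ K := by
            have : K * (1 - ‖μ‖) = C := by
              rw [hK]
              field_simp
            nlinarith [norm_nonneg μ]
          have : ‖μ‖ * ‖G m‖ ≤ ‖μ‖ * K :=
            mul_le_mul_of_nonneg_left h5 (norm_nonneg μ)
          linarith
  have hGbound : ∀ n : ℤ, ‖G n‖ ≤ K := fun n => main n.natAbs n le_rfl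
  -- real/imaginary parts: Re of G n resp. Im of G n
  have hre : ∀ n : ℤ, (G n).re = ∑ a : A, (g a).re * (sCount u a n : ℝ) := by
    intro n
    rw [hG]
    simp only [Complex.re_sum]
    refine Finset.sum_congr rfl fun a _ => ?_
    rw [Complex.mul_re]
    simp
  have him : ∀ n : ℤ, (G n).im = ∑ a : A, (g a).im * (sCount u a n : ℝ) := by
    intro n
    rw [hG]
    simp only [Complex.im_sum]
    refine Finset.sum_congr rfl fun a _ => ?_
    rw [Complex.mul_im]
    simp
  by_cases hrecase : ∃ t : ℝ, ∀ a : A, (g a).re = t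
  · -- imaginary part is non-constant
    refine ⟨fun a => (g a).im, ?_, K + 1, by linarith, ?_⟩
    · rintro ⟨t, ht⟩
      obtain ⟨s, hs⟩ := hrecase
      exact hgnc ⟨⟨s, t⟩, fun a => Complex.ext (hs a) (ht a)⟩
    · intro n
      have h1 : |(G n).im| ≤ ‖G n‖ := Complex.abs_im_le_norm _
      rw [← him n]
      linarith [hGbound n]
  · refine ⟨fun a => (g a).re, hrecase, K + 1, by linarith, ?_⟩
    intro n
    have h1 : |(G n).re| ≤ ‖G n‖ := Complex.abs_re_le_norm _
    rw [← hre n]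
    linarith [hGbound n]
end

section
/- Let A, B, C, D be integers with AD − BC = ±1 (unimodular), and ε, η irrational with ε ≠ η, A + Cε ≠ 0, A + Cη ≠ 0, Ω a bounded interval. Then Σ_{ε,η}(Ω) = (A + Cη) · Σ_{ε̃, η̃}((1/(A+Cε))·Ω), where ε̃ = (B + Dε)/(A + Cε) and η̃ = (B + Dη)/(A + Cη). -/
open Pointwise

private lemma key_id (A B C D a b t : ℝ) (h : A + C * t ≠ 0) :
    (A + C * t) * (a + b * ((B + D * t) / (A + C * t)))
      = (A * a + B * b) + (C * a + D * b) * t := by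
  field_simp
  ring

/-- The cut-and-project set `Σ_{ε,η}(Ω) = {a + bη : a, b ∈ ℤ, a + bε ∈ Ω}`. -/
def cutProject (ε η : ℝ) (Ω : Set ℝ) : Set ℝ :=
  {x : ℝ | ∃ a b : ℤ, x = (a : ℝ) + (b : ℝ) * η ∧ (a : ℝ) + (b : ℝ) * ε ∈ Ω}

/-- transformation of a cut-and-project set under a unimodular
integer matrix `[[A,B],[C,D]]`:
`Σ_{ε,η}(Ω) = (A + Cη) · Σ_{(B+Dε)/(A+Cε), (B+Dη)/(A+Cη)}((1/(A+Cε))·Ω)`. -/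
theorem cut_and_project_unimodular (A B C D : ℤ) (hdet : A * D - B * C = 1 ∨ A * D - B * C = -1)
    (ε η : ℝ) (hε : Irrational ε) (hη : Irrational η) (hne : ε ≠ η)
    (hAε : (A : ℝ) + (C : ℝ) * ε ≠ 0) (hAη : (A : ℝ) + (C : ℝ) * η ≠ 0)
    (c d : ℝ) :
    cutProject ε η (Set.Ico c d) =
      ((A : ℝ) + (C : ℝ) * η) •
        cutProject (((B : ℝ) + (D : ℝ) * ε) / ((A : ℝ) + (C : ℝ) * ε))
          (((B : ℝ) + (D : ℝ) * η) / ((A : ℝ) + (C : ℝ) * η))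
          ((1 / ((A : ℝ) + (C : ℝ) * ε)) • Set.Ico c d) := by
  have hδ : (A * D - B * C) * (A * D - B * C) = 1 := by
    rcases hdet with h | h <;> rw [h] <;> norm_num
  ext x
  simp only [cutProject, Set.mem_setOf_eq, Set.mem_smul_set]
  constructor
  · rintro ⟨a', b', hx, hm⟩
    set δ : ℤ := A * D - B * C with hδdef
    refine ⟨(↑(δ * (D * a' - B * b')) : ℝ) +
        (↑(δ * (A * b' - C * a')) : ℝ) * (((B : ℝ) + D * η) / ((A : ℝ) + C * η)),
      ⟨δ * (D * a' - B * b'), δ * (A * b' - C * a'), rfl, ?_⟩, ?_⟩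
    · have h1 : A * (δ * (D * a' - B * b')) + B * (δ * (A * b' - C * a')) = a' := by
        linear_combination a' * hδ
      have h2 : C * (δ * (D * a' - B * b')) + D * (δ * (A * b' - C * a')) = b' := by
        linear_combination b' * hδ
      have h1r : (A : ℝ) * (δ * (D * a' - B * b') : ℤ) + (B : ℝ) * (δ * (A * b' - C * a') : ℤ)
          = (a' : ℝ) := by exact_mod_cast congrArg (Int.cast : ℤ → ℝ) h1
      have h2r : (C : ℝ) * (δ * (D * a' - B * b') : ℤ) + (D : ℝ) * (δ * (A * b' - C * a') : ℤ)
          = (b' : ℝ) := by exact_mod_cast congrArg (Int.cast : ℤ → ℝ) h2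
      refine ⟨(a' : ℝ) + b' * ε, hm, ?_⟩
      have hk := key_id A B C D (δ * (D * a' - B * b') : ℤ) (δ * (A * b' - C * a') : ℤ) ε hAε
      rw [smul_eq_mul]
      rw [h1r, h2r] at hk
      rw [← hk, one_div, inv_mul_cancel_left₀ hAε]
    · have h1 : A * (δ * (D * a' - B * b')) + B * (δ * (A * b' - C * a')) = a' := by
        linear_combination a' * hδ
      have h2 : C * (δ * (D * a' - B * b')) + D * (δ * (A * b' - C * a')) = b' := by
        linear_combination b' * hδ
      have h1r : (A : ℝ) * (δ * (D * a' - B * b') : ℤ) + (B : ℝ) * (δ * (A * b' - C * a') : ℤ)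
          = (a' : ℝ) := by exact_mod_cast congrArg (Int.cast : ℤ → ℝ) h1
      have h2r : (C : ℝ) * (δ * (D * a' - B * b') : ℤ) + (D : ℝ) * (δ * (A * b' - C * a') : ℤ)
          = (b' : ℝ) := by exact_mod_cast congrArg (Int.cast : ℤ → ℝ) h2
      have hk := key_id A B C D (δ * (D * a' - B * b') : ℤ) (δ * (A * b' - C * a') : ℤ) η hAη
      rw [h1r, h2r] at hk
      rw [smul_eq_mul, hk, hx]
  · rintro ⟨y, ⟨a, b, hy, hm⟩, hxy⟩
    obtain ⟨z, hz, hz2⟩ := hm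
    have hkε := key_id A B C D a b ε hAε
    have hkη := key_id A B C D a b η hAη
    have hzval : z = ((A : ℝ) * a + B * b) + ((C : ℝ) * a + D * b) * ε := by
      rw [← hkε, ← hz2, smul_eq_mul]
      field_simp
    refine ⟨A * a + B * b, C * a + D * b, ?_, ?_⟩
    · rw [← hxy, hy, smul_eq_mul, hkη]
      push_cast
      ring
    · have : ((A * a + B * b : ℤ) : ℝ) + ((C * a + D * b : ℤ) : ℝ) * ε = z := by
        rw [hzval]; push_cast; ring
      rw [this]; exact hz
end
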